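/- arXiv:1602.01049 — 3 statements merged into one kernel-verified Lean document; each statement's English description precedes it below -/
import Mathlib

section
/- Let x : ℝ → ℝ² be a twice differentiable solution of the planar Kepler problem (so x(t) ≠ 0 and ẍ(t) = −x(t)/|x(t)|³ for all t), and define ξ : ℝ → ℝ² along the solution by ξ₁ = −½x₂ẋ₂ and ξ₂ = x₁ẋ₂ − ½ẋ₁x₂. Then for all t: ⟨−x/|x|³, ξ⟩ + ⟨ẋ, ξ'⟩ = ẋ₁/|x| − ⟨x, ẋ⟩·x₁/|x|³, and this quantity equals d/dt(x₁/|x|). (Here −x/|x|³ = ∇ₓ𝓛(x, ẋ) and ẋ = ∇ᵥ𝓛(x, ẋ) for the Kepler Lagrangian 𝓛(x, v) = ½|v|² + 1/|x|.) -/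
open scoped RealInnerProductSpace

/-- For a solution of the planar Kepler problem and the Noether vector field
`ξ₁ = −½x₂ẋ₂`, `ξ₂ = x₁ẋ₂ − ½ẋ₁x₂`, we have
`⟨−x/|x|³, ξ⟩ + ⟨ẋ, ξ'⟩ = ẋ₁/|x| − ⟨x, ẋ⟩x₁/|x|³`, and this quantity equals
`d/dt (x₁/|x|)`.  (Here `−x/|x|³ = ∇ₓ𝓛(x, ẋ)` and `ẋ = ∇ᵥ𝓛(x, ẋ)` for the Kepler
Lagrangian `𝓛(x, v) = ½|v|² + 1/|x|`.) -/
theorem kepler_lrl_noether_identity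
    (x x' x'' : ℝ → EuclideanSpace ℝ (Fin 2))
    (hx : ∀ t, HasDerivAt x (x' t) t)
    (hx' : ∀ t, HasDerivAt x' (x'' t) t)
    (hne : ∀ t, x t ≠ 0)
    (hkepler : ∀ t, x'' t = -((‖x t‖ ^ 3)⁻¹ • x t))
    (ξ : ℝ → EuclideanSpace ℝ (Fin 2))
    (hξ0 : ∀ t, ξ t 0 = -(1 / 2) * x t 1 * x' t 1)
    (hξ1 : ∀ t, ξ t 1 = x t 0 * x' t 1 - (1 / 2) * x' t 0 * x t 1) :
    ∀ t : ℝ,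
      ⟪-((‖x t‖ ^ 3)⁻¹ • x t), ξ t⟫ + ⟪x' t, deriv ξ t⟫
          = x' t 0 / ‖x t‖ - ⟪x t, x' t⟫ * x t 0 / ‖x t‖ ^ 3
        ∧ HasDerivAt (fun s => x s 0 / ‖x s‖)
            (x' t 0 / ‖x t‖ - ⟪x t, x' t⟫ * x t 0 / ‖x t‖ ^ 3) t := by
  intro t
  have hxne : ‖x t‖ ≠ 0 := norm_ne_zero_iff.mpr (hne t)
  -- coordinate derivatives
  have hc : ∀ s : ℝ, ∀ i : Fin 2, HasDerivAt (fun s => x s i) (x' s i) s := fun s i => by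
    exact (EuclideanSpace.proj i).hasFDerivAt.comp_hasDerivAt s (hx s)
  have hc' : ∀ s : ℝ, ∀ i : Fin 2, HasDerivAt (fun s => x' s i) (x'' s i) s := fun s i => by
    exact (EuclideanSpace.proj i).hasFDerivAt.comp_hasDerivAt s (hx' s)
  -- derivatives of ξ components
  have h0 : HasDerivAt (fun s => ξ s 0)
      (-(1 / 2) * (x' t 1 * x' t 1 + x t 1 * x'' t 1)) t := by
    have he : (fun s => ξ s 0) = fun s => -(1 / 2) * (x s 1 * x' s 1) := by
      funext s; rw [hξ0 s]; ring
    rw [he]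
    exact ((hc t 1).mul (hc' t 1)).const_mul _
  have h1 : HasDerivAt (fun s => ξ s 1)
      ((x' t 0 * x' t 1 + x t 0 * x'' t 1)
        - (1 / 2) * (x'' t 0 * x t 1 + x' t 0 * x' t 1)) t := by
    have he : (fun s => ξ s 1) = fun s => x s 0 * x' s 1 - (1 / 2) * (x' s 0 * x s 1) := by
      funext s; rw [hξ1 s]; ring
    rw [he]
    exact ((hc t 0).mul (hc' t 1)).sub (((hc' t 0).mul (hc t 1)).const_mul _)
  -- derivative of ξ as a vector
  set V : EuclideanSpace ℝ (Fin 2) :=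
    (EuclideanSpace.equiv (Fin 2) ℝ).symm
      ![-(1 / 2) * (x' t 1 * x' t 1 + x t 1 * x'' t 1),
        (x' t 0 * x' t 1 + x t 0 * x'' t 1)
          - (1 / 2) * (x'' t 0 * x t 1 + x' t 0 * x' t 1)] with hV
  have hξV : HasDerivAt ξ V t := by
    have hpi : HasDerivAt (fun s => (EuclideanSpace.equiv (Fin 2) ℝ) (ξ s))
        ((EuclideanSpace.equiv (Fin 2) ℝ) V) t := by
      rw [hasDerivAt_pi]
      intro i
      fin_cases i
      · simpa [hV] using h0
      · simpa [hV] using h1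
    have := ((EuclideanSpace.equiv (Fin 2) ℝ).symm :
        (Fin 2 → ℝ) →L[ℝ] EuclideanSpace ℝ (Fin 2)).hasFDerivAt.comp_hasDerivAt t hpi
    simpa [Function.comp_def] using this
  have hderiv : deriv ξ t = V := hξV.deriv
  have hV0 : V 0 = -(1 / 2) * (x' t 1 * x' t 1 + x t 1 * x'' t 1) := by simp [hV]
  have hV1 : V 1 = (x' t 0 * x' t 1 + x t 0 * x'' t 1)
      - (1 / 2) * (x'' t 0 * x t 1 + x' t 0 * x' t 1) := by simp [hV]
  have hx''0 : x'' t 0 = -((‖x t‖ ^ 3)⁻¹ * x t 0) := by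
    rw [hkepler t]; simp
  have hx''1 : x'' t 1 = -((‖x t‖ ^ 3)⁻¹ * x t 1) := by
    rw [hkepler t]; simp
  have hnsq : x t 0 * x t 0 + x t 1 * x t 1 = ‖x t‖ ^ 2 := by
    rw [EuclideanSpace.norm_eq, Real.sq_sqrt (by positivity)]
    simp [Fin.sum_univ_two, sq]
  constructor
  · rw [hderiv]
    simp only [PiLp.inner_apply, Fin.sum_univ_two, RCLike.inner_apply, conj_trivial,
      PiLp.neg_apply, PiLp.smul_apply, smul_eq_mul, hV0, hV1, hξ0, hξ1, hx''0, hx''1]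
    field_simp
    linear_combination (2 * x' t 0) * hnsq
  · have hnorm : HasDerivAt (fun s => ‖x s‖) (⟪x t, x' t⟫ / ‖x t‖) t := by
      have hsq : HasDerivAt (fun s => ‖x s‖ ^ 2) (2 * ⟪x t, x' t⟫) t := (hx t).norm_sq
      have h := hsq.sqrt (by positivity)
      have he : (fun s => Real.sqrt (‖x s‖ ^ 2)) = fun s => ‖x s‖ := by
        funext s; rw [Real.sqrt_sq (norm_nonneg _)]
      rw [he] at h
      convert h using 1
      rw [Real.sqrt_sq (norm_nonneg _)]
      ring
    have h := (hc t 0).div hnorm hxne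
    convert h using 1
    · rfl
    · rfl
    · funext s; simp [div_eq_mul_inv]
    field_simp
end

section
/- Let 𝓛̄ : (ℝ² \ {0}) × ℝ² → ℝ be given by 𝓛̄(x, v) = 1/|x|⁴ − 2|v|²/|x|³ + 6⟨x, v⟩²/|x|⁵, and let x : ℝ → ℝ² be a twice differentiable solution of the planar Kepler problem (so x(t) ≠ 0 and ẍ(t) = −x(t)/|x(t)|³ for all t). Then the Euler–Lagrange expression of 𝓛̄ evaluated along the solution, EL(𝓛̄)(t) = ∇ₓ𝓛̄(x(t), ẋ(t)) − d/dt[∇ᵥ𝓛̄(x(t), ẋ(t))], equals 4x/|x|⁶ − 6|ẋ|²x/|x|⁵ + 30⟨x, ẋ⟩²x/|x|⁷ − 12⟨x, ẋ⟩ẋ/|x|⁵ for all t. -/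
open scoped RealInnerProductSpace

/-- The `h²`-coefficient (up to the factor `1/24`) of the modified Lagrangian of the
Störmer–Verlet method for the Kepler problem:
`𝓛̄(x, v) = 1/|x|⁴ − 2|v|²/|x|³ + 6⟨x, v⟩²/|x|⁵`. -/
noncomputable def svPerturbation (x v : EuclideanSpace ℝ (Fin 2)) : ℝ :=
  (‖x‖ ^ 4)⁻¹ - 2 * ‖v‖ ^ 2 / ‖x‖ ^ 3 + 6 * ⟪x, v⟫ ^ 2 / ‖x‖ ^ 5

variable {E : Type*} [NormedAddCommGroup E] [InnerProductSpace ℝ E]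

lemma hasFDerivAt_norm' {x : E} (hx : x ≠ 0) :
    HasFDerivAt (fun y : E => ‖y‖) (‖x‖⁻¹ • innerSL ℝ x) x := by
  have hr : ‖x‖ ≠ 0 := norm_ne_zero_iff.mpr hx
  have h1 : HasFDerivAt (fun y : E => ‖y‖ ^ 2) ((2:ℕ) • innerSL ℝ x) x :=
    (hasStrictFDerivAt_norm_sq x).hasFDerivAt
  have h2 := h1.sqrt (pow_ne_zero 2 hr)
  have hfun : (fun y : E => Real.sqrt (‖y‖ ^ 2)) = fun y : E => ‖y‖ := by
    funext y; exact Real.sqrt_sq (norm_nonneg y)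
  rw [hfun] at h2
  convert h2 using 1
  ext y
  simp only [ContinuousLinearMap.smul_apply, innerSL_apply_apply, Real.sqrt_sq (norm_nonneg x),
    smul_eq_mul, nsmul_eq_mul, Nat.cast_ofNat]
  field_simp

lemma gradX (x v : EuclideanSpace ℝ (Fin 2)) (hx : x ≠ 0) :
    HasGradientAt (fun y => svPerturbation y v)
      ((-4 / ‖x‖ ^ 6 + 6 * ‖v‖ ^ 2 / ‖x‖ ^ 5 - 30 * ⟪x, v⟫ ^ 2 / ‖x‖ ^ 7) • x
        + (12 * ⟪x, v⟫ / ‖x‖ ^ 5) • v) x := by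
  have hr : ‖x‖ ≠ 0 := norm_ne_zero_iff.mpr hx
  rw [hasGradientAt_iff_hasFDerivAt]
  have hN := hasFDerivAt_norm' hx
  have hS : HasFDerivAt (fun y : EuclideanSpace ℝ (Fin 2) => ⟪y, v⟫) (innerSL ℝ v) x :=
    (innerSL ℝ v).hasFDerivAt.congr_of_eventuallyEq
      (Filter.Eventually.of_forall fun y => real_inner_comm v y)
  have h4i := (hasDerivAt_inv (pow_ne_zero 4 hr)).comp_hasFDerivAt x
    ((hasDerivAt_pow 4 ‖x‖).comp_hasFDerivAt x hN)
  have h3i := (hasDerivAt_inv (pow_ne_zero 3 hr)).comp_hasFDerivAt x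
    ((hasDerivAt_pow 3 ‖x‖).comp_hasFDerivAt x hN)
  have h5i := (hasDerivAt_inv (pow_ne_zero 5 hr)).comp_hasFDerivAt x
    ((hasDerivAt_pow 5 ‖x‖).comp_hasFDerivAt x hN)
  have hS2 := (hasDerivAt_pow 2 (⟪x, v⟫)).comp_hasFDerivAt x hS
  have hterm2 := h3i.const_mul (2 * ‖v‖ ^ 2)
  have hterm3 := (hS2.mul h5i).const_mul (6:ℝ)
  have H := (h4i.sub hterm2).add hterm3
  convert H using 1
  · rfl
  · rfl
  · funext y
    simp only [svPerturbation, Pi.add_apply, Pi.sub_apply, Pi.mul_apply, Pi.inv_apply, Pi.pow_apply, Function.comp_apply, Function.comp]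
    ring
  ext y
  simp only [ContinuousLinearMap.add_apply, ContinuousLinearMap.sub_apply,
    ContinuousLinearMap.smul_apply, ContinuousLinearMap.neg_apply, innerSL_apply_apply,
    InnerProductSpace.toDual_apply_apply, inner_add_left, real_inner_smul_left, smul_eq_mul,
    real_inner_comm y v, Function.comp_apply]
  field_simp
  ring

lemma gradV (x v : EuclideanSpace ℝ (Fin 2)) (hx : x ≠ 0) :
    HasGradientAt (fun w => svPerturbation x w)
      ((-4 / ‖x‖ ^ 3) • v + (12 * ⟪x, v⟫ / ‖x‖ ^ 5) • x) v := by
  have hr : ‖x‖ ≠ 0 := norm_ne_zero_iff.mpr hx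
  rw [hasGradientAt_iff_hasFDerivAt]
  have hN : HasFDerivAt (fun w : EuclideanSpace ℝ (Fin 2) => ‖w‖ ^ 2)
      ((2:ℕ) • innerSL ℝ v) v := (hasStrictFDerivAt_norm_sq v).hasFDerivAt
  have hS : HasFDerivAt (fun w : EuclideanSpace ℝ (Fin 2) => ⟪x, w⟫) (innerSL ℝ x) v :=
    (innerSL ℝ x).hasFDerivAt
  have hS2 := (hasDerivAt_pow 2 (⟪x, v⟫)).comp_hasFDerivAt v hS
  have hterm2 := hN.const_mul (2 / ‖x‖ ^ 3)
  have hterm3 := hS2.const_mul (6 / ‖x‖ ^ 5)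
  have H := ((hasFDerivAt_const ((‖x‖ ^ 4)⁻¹) v).sub hterm2).add hterm3
  convert H using 1
  · rfl
  · rfl
  · funext w
    simp only [svPerturbation, Pi.add_apply, Pi.sub_apply, Pi.mul_apply, Pi.inv_apply, Pi.pow_apply, Function.comp_apply, Function.comp]
    ring
  ext w
  simp only [ContinuousLinearMap.add_apply, ContinuousLinearMap.sub_apply,
    ContinuousLinearMap.smul_apply, ContinuousLinearMap.zero_apply, innerSL_apply_apply,
    InnerProductSpace.toDual_apply_apply, inner_add_left, real_inner_smul_left, smul_eq_mul,
    nsmul_eq_mul, Nat.cast_ofNat, real_inner_comm w v]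
  field_simp
  ring

/-- Along a twice differentiable solution of the planar Kepler problem, the
Euler–Lagrange expression `EL(𝓛̄)(t) = ∇ₓ𝓛̄(x, ẋ) − d/dt[∇ᵥ𝓛̄(x, ẋ)]` of
`𝓛̄(x, v) = 1/|x|⁴ − 2|v|²/|x|³ + 6⟨x, v⟩²/|x|⁵` equals
`4x/|x|⁶ − 6|ẋ|²x/|x|⁵ + 30⟨x, ẋ⟩²x/|x|⁷ − 12⟨x, ẋ⟩ẋ/|x|⁵`.
Here `Lx` and `Lv` denote the gradients of `𝓛̄` in the first and second argument,
given along the solution as gradient hypotheses. -/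
theorem EL_sv_perturbation_eq
    (x x' x'' : ℝ → EuclideanSpace ℝ (Fin 2))
    (hx : ∀ t, HasDerivAt x (x' t) t)
    (hx' : ∀ t, HasDerivAt x' (x'' t) t)
    (hne : ∀ t, x t ≠ 0)
    (hkepler : ∀ t, x'' t = -((‖x t‖ ^ 3)⁻¹ • x t))
    (Lx Lv : EuclideanSpace ℝ (Fin 2) → EuclideanSpace ℝ (Fin 2) →
      EuclideanSpace ℝ (Fin 2))
    (hLx : ∀ t, HasGradientAt (fun y => svPerturbation y (x' t))
      (Lx (x t) (x' t)) (x t))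
    (hLv : ∀ t, HasGradientAt (fun w => svPerturbation (x t) w)
      (Lv (x t) (x' t)) (x' t)) :
    ∀ t : ℝ,
      Lx (x t) (x' t) - deriv (fun s => Lv (x s) (x' s)) t
        = (4 / ‖x t‖ ^ 6) • x t - (6 * ‖x' t‖ ^ 2 / ‖x t‖ ^ 5) • x t
          + (30 * ⟪x t, x' t⟫ ^ 2 / ‖x t‖ ^ 7) • x t
          - (12 * ⟪x t, x' t⟫ / ‖x t‖ ^ 5) • x' t := by
  intro t
  have hr : ∀ s, ‖x s‖ ≠ 0 := fun s => norm_ne_zero_iff.mpr (hne s)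
  have hLxEq : Lx (x t) (x' t)
      = (-4 / ‖x t‖ ^ 6 + 6 * ‖x' t‖ ^ 2 / ‖x t‖ ^ 5 - 30 * ⟪x t, x' t⟫ ^ 2 / ‖x t‖ ^ 7) • x t
        + (12 * ⟪x t, x' t⟫ / ‖x t‖ ^ 5) • x' t :=
    (hLx t).unique (gradX _ _ (hne t))
  have hLvEq : (fun s => Lv (x s) (x' s))
      = fun s => (-4 * (‖x s‖ ^ 3)⁻¹) • x' s + (12 * ⟪x s, x' s⟫ * (‖x s‖ ^ 5)⁻¹) • x s :=
    funext fun s => ((hLv s).unique (gradV _ _ (hne s))).trans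
      (by rw [div_eq_mul_inv, div_eq_mul_inv, mul_assoc])
  -- derivative of the curve s ↦ ‖x s‖
  have hR : HasDerivAt (fun s => ‖x s‖) (‖x t‖⁻¹ * ⟪x t, x' t⟫) t := by
    have := (hasFDerivAt_norm' (hne t)).comp_hasDerivAt t (hx t)
    exact this
  have hR3i := (hR.pow 3).inv (pow_ne_zero 3 (hr t))
  have hR5i := (hR.pow 5).inv (pow_ne_zero 5 (hr t))
  have hSs : HasDerivAt (fun s => ⟪x s, x' s⟫) (⟪x t, x'' t⟫ + ⟪x' t, x' t⟫) t :=
    (hx t).inner ℝ (hx' t)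
  have hc1 := hR3i.const_mul (-4 : ℝ)
  have hc2 := (hSs.const_mul (12 : ℝ)).mul hR5i
  have HF := (hc1.smul (hx' t)).add (hc2.smul (hx t))
  have HF' : HasDerivAt (fun s => (-4 * (‖x s‖ ^ 3)⁻¹) • x' s + (12 * ⟪x s, x' s⟫ * (‖x s‖ ^ 5)⁻¹) • x s) _ t := HF
  rw [hLvEq, HF'.deriv, hLxEq, hkepler t]
  simp only [Pi.add_apply, Pi.sub_apply, Pi.mul_apply, Pi.inv_apply, Pi.pow_apply, inner_neg_right, real_inner_smul_right, real_inner_self_eq_norm_sq,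
    real_inner_smul_left, smul_smul, neg_smul, smul_neg]
  have hrt : ‖x t‖ ≠ 0 := hr t
  generalize ‖x t‖ = r at hrt ⊢
  generalize (⟪x t, x' t⟫ : ℝ) = p
  generalize ‖x' t‖ = q
  match_scalars <;> (field_simp; ring)
end

section
/- Let x : ℝ → ℝ² be a twice differentiable solution of the planar Kepler problem (so x(t) ≠ 0 and ẍ(t) = −x(t)/|x(t)|³ for all t), with (constant) angular momentum 𝕃 = x₁ẋ₂ − ẋ₁x₂ and energy 𝔼 = ½|ẋ|² − 1/|x|. Define ξ : ℝ → ℝ² by ξ₁ = −½x₂ẋ₂, ξ₂ = x₁ẋ₂ − ½ẋ₁x₂, and let W(t) = 4x/|x|⁶ − 6|ẋ|²x/|x|⁵ + 30⟨x, ẋ⟩²x/|x|⁷ − 12⟨x, ẋ⟩ẋ/|x|⁵ (the Euler–Lagrange expression of the Störmer–Verlet perturbation along the solution). Then for all t: ⟨W(t), ξ(t)⟩ = 𝕃 · ( 30·x₂/|x|⁶ + 24·𝔼·x₂/|x|⁵ − 15·𝕃²·x₂/|x|⁷ + 4·d/dt(ẋ₂/|x|³) ). -/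
open scoped RealInnerProductSpace

/-- Derivative of the norm of a curve in an inner product space. -/
lemma hasDerivAt_norm_curve {F : Type*} [NormedAddCommGroup F] [InnerProductSpace ℝ F]
    {f : ℝ → F} {f' : F} {t : ℝ} (hf : HasDerivAt f f' t) (h0 : f t ≠ 0) :
    HasDerivAt (fun s => ‖f s‖) (⟪f t, f'⟫ / ‖f t‖) t := by
  have h1 : HasDerivAt (fun s => ‖f s‖ ^ 2) (2 * ⟪f t, f'⟫) t := hf.norm_sq
  have h2 : (‖f t‖ ^ 2 : ℝ) ≠ 0 := pow_ne_zero 2 (norm_ne_zero_iff.mpr h0)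
  have h3 := h1.sqrt h2
  have h4 : (fun s => Real.sqrt (‖f s‖ ^ 2)) = fun s => ‖f s‖ := by
    funext s; exact Real.sqrt_sq (norm_nonneg _)
  rw [h4] at h3
  convert h3 using 1
  rw [Real.sqrt_sq (norm_nonneg _)]
  ring

/-- Along a twice differentiable solution of the planar Kepler problem, with
angular momentum `𝕃 = x₁ẋ₂ − ẋ₁x₂`, energy `𝔼 = ½|ẋ|² − 1/|x|`, Noether vector
field `ξ₁ = −½x₂ẋ₂`, `ξ₂ = x₁ẋ₂ − ½ẋ₁x₂`, and
`W = 4x/|x|⁶ − 6|ẋ|²x/|x|⁵ + 30⟨x, ẋ⟩²x/|x|⁷ − 12⟨x, ẋ⟩ẋ/|x|⁵` (the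
Euler–Lagrange expression of the Störmer–Verlet perturbation), one has
`⟨W, ξ⟩ = 𝕃(30x₂/|x|⁶ + 24𝔼x₂/|x|⁵ − 15𝕃²x₂/|x|⁷ + 4 d/dt(ẋ₂/|x|³))`. -/
theorem sv_precession_inner_identity
    (x x' x'' : ℝ → EuclideanSpace ℝ (Fin 2))
    (hx : ∀ t, HasDerivAt x (x' t) t)
    (hx' : ∀ t, HasDerivAt x' (x'' t) t)
    (hne : ∀ t, x t ≠ 0)
    (hkepler : ∀ t, x'' t = -((‖x t‖ ^ 3)⁻¹ • x t))
    (ξ : ℝ → EuclideanSpace ℝ (Fin 2))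
    (hξ0 : ∀ t, ξ t 0 = -(1 / 2) * x t 1 * x' t 1)
    (hξ1 : ∀ t, ξ t 1 = x t 0 * x' t 1 - (1 / 2) * x' t 0 * x t 1) :
    ∀ t : ℝ,
      ⟪(4 / ‖x t‖ ^ 6) • x t - (6 * ‖x' t‖ ^ 2 / ‖x t‖ ^ 5) • x t
          + (30 * ⟪x t, x' t⟫ ^ 2 / ‖x t‖ ^ 7) • x t
          - (12 * ⟪x t, x' t⟫ / ‖x t‖ ^ 5) • x' t, ξ t⟫
        = (x t 0 * x' t 1 - x' t 0 * x t 1) *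
            (30 * x t 1 / ‖x t‖ ^ 6
              + 24 * ((1 / 2) * ‖x' t‖ ^ 2 - ‖x t‖⁻¹) * x t 1 / ‖x t‖ ^ 5
              - 15 * (x t 0 * x' t 1 - x' t 0 * x t 1) ^ 2 * x t 1 / ‖x t‖ ^ 7
              + 4 * deriv (fun s => x' s 1 / ‖x s‖ ^ 3) t) := by
  intro t
  set r : ℝ := ‖x t‖ with hr
  have hrpos : 0 < r := norm_pos_iff.mpr (hne t)
  have hrne : r ≠ 0 := ne_of_gt hrpos
  set a := x t 0
  set b := x t 1
  set a' := x' t 0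
  set b' := x' t 1
  have hp : ⟪x t, x' t⟫ = a * a' + b * b' := by
    simp [PiLp.inner_apply, Fin.sum_univ_two, a, b, a', b', mul_comm]
  have hr2 : r ^ 2 = a ^ 2 + b ^ 2 := by
    rw [hr, ← real_inner_self_eq_norm_sq]
    simp only [PiLp.inner_apply, Fin.sum_univ_two, RCLike.inner_apply, conj_trivial, a, b]
    ring
  have hv2 : ‖x' t‖ ^ 2 = a' ^ 2 + b' ^ 2 := by
    rw [← real_inner_self_eq_norm_sq]
    simp only [PiLp.inner_apply, Fin.sum_univ_two, RCLike.inner_apply, conj_trivial, a', b']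
    ring
  -- compute the derivative term
  have hb'' : x'' t 1 = -(b / r ^ 3) := by
    rw [hkepler t]
    simp [b, div_eq_inv_mul]
    exact Or.inl rfl
  have hd1 : HasDerivAt (fun s => x' s 1) (x'' t 1) t := by
    simpa [Function.comp_def] using
      ((EuclideanSpace.proj (1 : Fin 2) :
        EuclideanSpace ℝ (Fin 2) →L[ℝ] ℝ).hasFDerivAt.comp_hasDerivAt t (hx' t))
  have hdn : HasDerivAt (fun s => ‖x s‖) (⟪x t, x' t⟫ / r) t :=
    hasDerivAt_norm_curve (hx t) (hne t)
  have hdn3 : HasDerivAt (fun s => ‖x s‖ ^ 3) (3 * r ^ 2 * (⟪x t, x' t⟫ / r)) t := by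
    simpa [Pi.pow_def] using hdn.pow 3
  have hr3 : (r : ℝ) ^ 3 ≠ 0 := pow_ne_zero _ hrne
  have hdiv : HasDerivAt (fun s => x' s 1 / ‖x s‖ ^ 3)
      ((x'' t 1 * r ^ 3 - b' * (3 * r ^ 2 * (⟪x t, x' t⟫ / r))) / (r ^ 3) ^ 2) t :=
    hd1.div hdn3 hr3
  have hderiv : deriv (fun s => x' s 1 / ‖x s‖ ^ 3) t
      = (-(b / r ^ 3) * r ^ 3 - b' * (3 * r ^ 2 * ((a * a' + b * b') / r))) / (r ^ 3) ^ 2 := by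
    rw [hdiv.deriv, hb'', hp]
  -- expand the inner product
  have hinner : ⟪(4 / ‖x t‖ ^ 6) • x t - (6 * ‖x' t‖ ^ 2 / ‖x t‖ ^ 5) • x t
          + (30 * ⟪x t, x' t⟫ ^ 2 / ‖x t‖ ^ 7) • x t
          - (12 * ⟪x t, x' t⟫ / ‖x t‖ ^ 5) • x' t, ξ t⟫
      = (4 / r ^ 6 - 6 * (a' ^ 2 + b' ^ 2) / r ^ 5
            + 30 * (a * a' + b * b') ^ 2 / r ^ 7) *
          (a * (-(1 / 2) * b * b') + b * (a * b' - (1 / 2) * a' * b))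
        - (12 * (a * a' + b * b') / r ^ 5) *
          (a' * (-(1 / 2) * b * b') + b' * (a * b' - (1 / 2) * a' * b)) := by
    simp only [inner_sub_left, inner_add_left, inner_smul_left, PiLp.inner_apply,
      Fin.sum_univ_two, RCLike.inner_apply, conj_trivial, hξ0 t, hξ1 t, hp, hv2, ← hr]
    ring
  rw [hderiv, hinner, hv2]
  have hN : (a * b' - a' * b) *
        (2 * b * r - 3 * (a' ^ 2 + b' ^ 2) * b * r ^ 2 + 15 * (a * a' + b * b') ^ 2 * b
          - 12 * (a * a' + b * b') * b' * r ^ 2)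
      = (a * b' - a' * b) *
        (2 * b * r + 12 * (a' ^ 2 + b' ^ 2) * b * r ^ 2
          - 15 * (a * b' - a' * b) ^ 2 * b - 12 * (a * a' + b * b') * b' * r ^ 2) := by
    linear_combination (-15 * (a * b' - a' * b) * b * (a' ^ 2 + b' ^ 2)) * hr2
  trans ((a * b' - a' * b) *
        (2 * b * r - 3 * (a' ^ 2 + b' ^ 2) * b * r ^ 2 + 15 * (a * a' + b * b') ^ 2 * b
          - 12 * (a * a' + b * b') * b' * r ^ 2) / r ^ 7)
  · field_simp
    ring
  · rw [hN]
    field_simp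
    ring
end
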